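/- Let D be a minimal strong digraph (MSD), C_q a directed cycle of length q contained in D, D' the digraph obtained from D by deleting all arcs of C_q, and H the Hasse diagram associated to (D,C_q), obtained from D' by contracting each strong component to a single vertex. If u and v are vertices of H joined by an arc uv of H, then the strong components of D' corresponding to u and to v cannot both contain vertices of C_q. -/
import Mathlib


/-- A digraph (given by its arc relation `A`) is strongly connected if every vertex
can reach every vertex by a directed path. -/
def StronglyConnected {V : Type*} (A : V → V → Prop) : Prop :=
  ∀ u v : V, Relation.ReflTransGen A u v

/-- A minimal strong digraph: strongly connected, and deleting any arc destroys
strong connectivity. -/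
def IsMSD {V : Type*} (A : V → V → Prop) : Prop :=
  StronglyConnected A ∧
    ∀ a b : V, A a b →
      ¬ StronglyConnected (fun x y => A x y ∧ ¬(x = a ∧ y = b))

/-- `c : ZMod q → V` describes a directed cycle of length `q` contained in the digraph `A`. -/
def IsCycleIn {V : Type*} (A : V → V → Prop) (q : ℕ) (c : ZMod q → V) : Prop :=
  2 ≤ q ∧ Function.Injective c ∧ ∀ i : ZMod q, A (c i) (c (i + 1))

/-- The digraph `D'` obtained from `A` by deleting all arcs of the cycle `c`. -/
def DelCycle {V : Type*} (A : V → V → Prop) (q : ℕ) (c : ZMod q → V) : V → V → Prop :=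
  fun x y => A x y ∧ ¬ ∃ i : ZMod q, x = c i ∧ y = c (i + 1)

/-- Mutual reachability of two vertices. -/
def MutReach {V : Type*} (A : V → V → Prop) (u v : V) : Prop :=
  Relation.ReflTransGen A u v ∧ Relation.ReflTransGen A v u

/-- `S` is (the vertex set of) a strong component of the digraph `A`. -/
def IsSC {V : Type*} (A : V → V → Prop) (S : Set V) : Prop :=
  ∃ v : V, S = {u | MutReach A v u}

/-- Indegree of `v`. -/
noncomputable def indeg {V : Type*} (A : V → V → Prop) (v : V) : ℕ := {u | A u v}.ncard

/-- Outdegree of `v`. -/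
noncomputable def outdeg {V : Type*} (A : V → V → Prop) (v : V) : ℕ := {u | A v u}.ncard

/-- A vertex is linear if its indegree and outdegree both equal 1. -/
def IsLinear {V : Type*} (A : V → V → Prop) (v : V) : Prop :=
  indeg A v = 1 ∧ outdeg A v = 1

/-- A vertex `v` is a cut point if deleting `v` (and its incident arcs) leaves a
digraph whose underlying graph is disconnected. -/
def IsCutPoint {V : Type*} (A : V → V → Prop) (v : V) : Prop :=
  ∃ x y : V, x ≠ v ∧ y ≠ v ∧
    ¬ Relation.ReflTransGen (fun a b => a ≠ v ∧ b ≠ v ∧ (A a b ∨ A b a)) x y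

/-- Adjacency in the condensation (Hasse diagram) of the digraph `A`:
two distinct strong components with an arc from the first to the second. -/
def HAdj {V : Type*} (A : V → V → Prop) (S T : Set V) : Prop :=
  IsSC A S ∧ IsSC A T ∧ S ≠ T ∧ ∃ u ∈ S, ∃ v ∈ T, A u v

noncomputable def HIndeg {V : Type*} (A : V → V → Prop) (S : Set V) : ℕ := {T : Set V | HAdj A T S}.ncard
noncomputable def HOutdeg {V : Type*} (A : V → V → Prop) (S : Set V) : ℕ := {T : Set V | HAdj A S T}.ncard

/-- A vertex of the Hasse diagram is linear if its indegree and outdegree there equal 1. -/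
def HLinear {V : Type*} (A : V → V → Prop) (S : Set V) : Prop :=
  HIndeg A S = 1 ∧ HOutdeg A S = 1

/-- Four elements of `ZMod q` appear in this cyclic order (all distinct). -/
def CyclicOrder4 {q : ℕ} (a b c d : ZMod q) : Prop :=
  0 < (b - a).val ∧ (b - a).val < (c - a).val ∧ (c - a).val < (d - a).val

/-- If `S → T` is an arc of the Hasse diagram associated to `(D, C_q)`, then
`S` and `T` cannot both contain vertices of `C_q`. -/
theorem stmt8 {V : Type*} [Fintype V] (A : V → V → Prop) (q : ℕ) (c : ZMod q → V)
    (hMSD : IsMSD A) (hc : IsCycleIn A q c) (S T : Set V)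
    (hST : HAdj (DelCycle A q c) S T) :
    ¬((∃ i : ZMod q, c i ∈ S) ∧ (∃ j : ZMod q, c j ∈ T)) := by
  rintro ⟨⟨i, hiS⟩, ⟨j, hjT⟩⟩
  obtain ⟨hS, hT, hSneT, u, huS, v, hvT, huv⟩ := hST
  have hq : 2 ≤ q := hc.1
  haveI : NeZero q := ⟨by omega⟩
  set A' := DelCycle A q c with hA'def
  set A₂ : V → V → Prop := fun x y => A x y ∧ ¬(x = u ∧ y = v) with hA₂def
  have mutSymm : ∀ {a b : V}, MutReach A' a b → MutReach A' b a := fun h => ⟨h.2, h.1⟩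
  have mutTrans : ∀ {a b d : V}, MutReach A' a b → MutReach A' b d → MutReach A' a d :=
    fun h1 h2 => ⟨h1.1.trans h2.1, h2.2.trans h1.2⟩
  -- distinct strong components are disjoint
  have disj : ∀ x, x ∈ S → x ∉ T := by
    intro x hxS hxT
    obtain ⟨w, rfl⟩ := hS
    obtain ⟨w', rfl⟩ := hT
    apply hSneT
    have hww' : MutReach A' w w' := mutTrans hxS (mutSymm hxT)
    ext y
    exact ⟨fun hy => mutTrans (mutSymm hww') hy, fun hy => mutTrans hww' hy⟩
  -- reachability inside a strong component
  have reach_in : ∀ (W : Set V), IsSC A' W → ∀ x ∈ W, ∀ y ∈ W,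
      Relation.ReflTransGen A' x y := by
    rintro W ⟨w, rfl⟩ x hx y hy
    exact Relation.ReflTransGen.trans hx.2 hy.1
  -- a path inside a strong component avoiding u or v avoids the arc (u,v)
  have comp_path : ∀ (W : Set V), IsSC A' W → (u ∉ W ∨ v ∉ W) →
      ∀ y ∈ W, ∀ x, Relation.ReflTransGen A' x y → x ∈ W →
        Relation.ReflTransGen A₂ x y := by
    intro W hW hcond y hy x hxy
    induction hxy using Relation.ReflTransGen.head_induction_on with
    | refl => intro _; exact Relation.ReflTransGen.refl
    | @head a b harc hrest ih =>
      intro haW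
      obtain ⟨w, hWdef⟩ := hW
      have hbW : b ∈ W := by
        subst hWdef
        exact ⟨haW.1.tail harc, hrest.trans hy.2⟩
      have harc2 : A₂ a b := by
        refine ⟨harc.1, ?_⟩
        rintro ⟨rfl, rfl⟩
        rcases hcond with h | h
        · exact h haW
        · exact h hbW
      exact Relation.ReflTransGen.head harc2 (ih hbW)
  -- going around the cycle avoids the arc (u,v)
  have cyc : ∀ (k : ZMod q) (n : ℕ), Relation.ReflTransGen A₂ (c k) (c (k + n)) := by
    intro k n
    induction n with
    | zero => simpa using Relation.ReflTransGen.refl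
    | succ m ih =>
      have harc : A₂ (c (k + m)) (c (k + m + 1)) := by
        refine ⟨hc.2.2 (k + m), ?_⟩
        rintro ⟨hu, hv⟩
        exact huv.2 ⟨k + m, hu.symm, hv.symm⟩
      have hcast : (k + ((m + 1 : ℕ) : ZMod q)) = k + (m : ℕ) + 1 := by
        push_cast; ring
      rw [hcast]
      exact ih.tail harc
  have cycij : Relation.ReflTransGen A₂ (c i) (c j) := by
    have h1 : ((j - i).val : ZMod q) = j - i := by
      simp [ZMod.natCast_val, ZMod.cast_id]
    have := cyc i (j - i).val
    rwa [h1, add_sub_cancel] at this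
  -- assemble the detour u → c i → c j → v
  have pathS : Relation.ReflTransGen A₂ u (c i) :=
    comp_path S hS (Or.inr (fun h => disj v h hvT)) (c i) hiS u
      (reach_in S hS u huS (c i) hiS) huS
  have pathT : Relation.ReflTransGen A₂ (c j) v :=
    comp_path T hT (Or.inl (disj u huS)) v hvT (c j)
      (reach_in T hT (c j) hjT v hvT) hjT
  have detour : Relation.ReflTransGen A₂ u v := (pathS.trans cycij).trans pathT
  -- lift any path in A to a path avoiding the arc (u,v)
  have lift : ∀ x y : V, Relation.ReflTransGen A x y → Relation.ReflTransGen A₂ x y := by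
    intro x y h
    induction h with
    | refl => exact Relation.ReflTransGen.refl
    | @tail b d hab hbc ih =>
      by_cases hcase : b = u ∧ d = v
      · obtain ⟨rfl, rfl⟩ := hcase
        exact ih.trans detour
      · exact ih.tail ⟨hbc, hcase⟩
  exact hMSD.2 u v huv.1 (fun x y => lift x y (hMSD.1 x y))
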